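/- Let k be a field of characteristic zero, and consider the polynomial ring k[x₁,…,xₘ,y₁,…,yₘ,t] modulo the ideal generated by (xᵢyᵢ − t), i = 1,…,m. Every polynomial invariant under the diagonal permutation action of the symmetric group Sₘ (permuting the xᵢ and yᵢ simultaneously) is a polynomial in t and the elementary symmetric functions σˣ₁,…,σˣₘ of the x's and σʸ₁,…,σʸₘ of the y's. -/

import Mathlib

open MvPolynomial Finset

noncomputable section Stmt2Aux

namespace Stmt2

abbrev V (m : ℕ) : Type := (Fin m ⊕ Fin m) ⊕ Unit

variable (k : Type*) [Field k] (m : ℕ)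

def Aset : Set (MvPolynomial (V m) k) :=
  ({X (Sum.inr ())} : Set (MvPolynomial ((Fin m ⊕ Fin m) ⊕ Unit) k)) ∪
    (Set.range fun j : Fin (m + 1) =>
      rename (Sum.inl ∘ Sum.inl) (esymm (Fin m) k (j : ℕ))) ∪
    (Set.range fun j : Fin (m + 1) =>
      rename (Sum.inl ∘ Sum.inr) (esymm (Fin m) k (j : ℕ)))

def blk (c : ℕ × ℕ) (i : Fin m) : MvPolynomial (V m) k :=
  X (Sum.inl (Sum.inl i)) ^ c.1 * X (Sum.inl (Sum.inr i)) ^ c.2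

def ren (g : Equiv.Perm (Fin m)) :
    MvPolynomial (V m) k →ₐ[k] MvPolynomial (V m) k :=
  rename (Sum.map (Sum.map (⇑g) (⇑g)) id)

def mon (v : Fin m → ℕ × ℕ) : MvPolynomial (V m) k := ∏ i, blk k m (v i) i

def Av (v : Fin m → ℕ × ℕ) : MvPolynomial (V m) k :=
  ∑ g : Equiv.Perm (Fin m), ren k m g (mon k m v)

variable {k m}

lemma blk_add (c d : ℕ × ℕ) (i : Fin m) :
    blk k m (c + d) i = blk k m c i * blk k m d i := by
  simp only [blk, Prod.fst_add, Prod.snd_add, pow_add]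
  ring

lemma ren_blk (g : Equiv.Perm (Fin m)) (c : ℕ × ℕ) (i : Fin m) :
    ren k m g (blk k m c i) = blk k m c (g i) := by
  simp [blk, ren]

lemma ren_mon (g : Equiv.Perm (Fin m)) (v : Fin m → ℕ × ℕ) :
    ren k m g (mon k m v) = ∏ i, blk k m (v i) (g i) := by
  rw [mon, map_prod]
  exact Finset.prod_congr rfl fun i _ => ren_blk g (v i) i

lemma av_comp (σ : Equiv.Perm (Fin m)) (v : Fin m → ℕ × ℕ) :
    Av k m (v ∘ σ) = Av k m v := by
  unfold Av
  simp only [ren_mon]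
  calc ∑ g : Equiv.Perm (Fin m), ∏ i, blk k m (v (σ i)) (g i)
      = ∑ g : Equiv.Perm (Fin m), ∏ i, blk k m (v i) ((g * σ⁻¹) i) := by
        refine Finset.sum_congr rfl fun g _ => ?_
        rw [← Equiv.prod_comp σ (fun j => blk k m (v j) ((g * σ⁻¹) j))]
        refine Finset.prod_congr rfl fun i _ => ?_
        simp [Equiv.Perm.mul_apply]
    _ = ∑ g : Equiv.Perm (Fin m), ∏ i, blk k m (v i) (g i) :=
        Equiv.sum_comp (Equiv.mulRight σ⁻¹) (fun g => ∏ i, blk k m (v i) (g i))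

lemma blk_mul_mon (c : ℕ × ℕ) (i : Fin m) (w : Fin m → ℕ × ℕ) (g : Equiv.Perm (Fin m)) :
    blk k m c (g i) * ∏ j, blk k m (w j) (g j)
      = ∏ j, blk k m (Function.update w i (w i + c) j) (g j) := by
  rw [← Finset.mul_prod_erase univ (fun j => blk k m (w j) (g j)) (Finset.mem_univ i),
      ← Finset.mul_prod_erase univ
        (fun j => blk k m (Function.update w i (w i + c) j) (g j)) (Finset.mem_univ i)]
  rw [show (∏ j ∈ univ.erase i, blk k m (Function.update w i (w i + c) j) (g j))
        = ∏ j ∈ univ.erase i, blk k m (w j) (g j) from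
      Finset.prod_congr rfl fun j hj => by
        rw [Function.update_of_ne (Finset.ne_of_mem_erase hj)]]
  rw [Function.update_self, blk_add]
  ring

lemma pc_mul_av (c : ℕ × ℕ) (w : Fin m → ℕ × ℕ) :
    (∑ i, blk k m c i) * Av k m w
      = ∑ i, Av k m (Function.update w i (w i + c)) := by
  unfold Av
  simp only [ren_mon]
  rw [Finset.mul_sum]
  rw [Finset.sum_comm (γ := Fin m)]
  refine Finset.sum_congr rfl fun g _ => ?_
  rw [Finset.sum_mul]
  rw [← Equiv.sum_comp g (fun i => blk k m c i * ∏ j, blk k m (w j) (g j))]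
  exact Finset.sum_congr rfl fun i _ => blk_mul_mon c i w g


section Good

variable {I : Ideal (MvPolynomial (V m) k)}

def Good (I : Ideal (MvPolynomial (V m) k)) (P : MvPolynomial (V m) k) : Prop :=
  ∃ p ∈ Algebra.adjoin k (Aset k m), P - p ∈ I

lemma good_of_mem {P : MvPolynomial (V m) k}
    (h : P ∈ Algebra.adjoin k (Aset k m)) : Good I P :=
  ⟨P, h, by simp⟩

lemma Good.add {P Q : MvPolynomial (V m) k} (hP : Good I P) (hQ : Good I Q) :
    Good I (P + Q) := by
  obtain ⟨p, hp, hp'⟩ := hP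
  obtain ⟨q, hq, hq'⟩ := hQ
  exact ⟨p + q, add_mem hp hq, by
    have : P + Q - (p + q) = (P - p) + (Q - q) := by ring
    rw [this]; exact add_mem hp' hq'⟩

lemma Good.sub {P Q : MvPolynomial (V m) k} (hP : Good I P) (hQ : Good I Q) :
    Good I (P - Q) := by
  obtain ⟨p, hp, hp'⟩ := hP
  obtain ⟨q, hq, hq'⟩ := hQ
  exact ⟨p - q, sub_mem hp hq, by
    have : P - Q - (p - q) = (P - p) - (Q - q) := by ring
    rw [this]; exact sub_mem hp' hq'⟩

lemma Good.mul {P Q : MvPolynomial (V m) k} (hP : Good I P) (hQ : Good I Q) :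
    Good I (P * Q) := by
  obtain ⟨p, hp, hp'⟩ := hP
  obtain ⟨q, hq, hq'⟩ := hQ
  exact ⟨p * q, mul_mem hp hq, by
    have : P * Q - p * q = (P - p) * Q + p * (Q - q) := by ring
    rw [this]; exact add_mem (I.mul_mem_right _ hp') (I.mul_mem_left _ hq')⟩

lemma Good.smul {P : MvPolynomial (V m) k} (a : k) (hP : Good I P) :
    Good I (a • P) := by
  obtain ⟨p, hp, hp'⟩ := hP
  exact ⟨a • p, Subalgebra.smul_mem _ hp a, by
    rw [← smul_sub, MvPolynomial.smul_eq_C_mul]; exact I.mul_mem_left _ hp'⟩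

lemma good_sum {α : Type*} (s : Finset α) (f : α → MvPolynomial (V m) k)
    (h : ∀ a ∈ s, Good I (f a)) : Good I (∑ a ∈ s, f a) := by
  classical
  induction s using Finset.induction_on with
  | empty => exact good_of_mem (by simpa using zero_mem _)
  | insert _ _ hnot ih =>
    rw [Finset.sum_insert hnot]
    exact (h _ (Finset.mem_insert_self _ _)).add
      (ih fun a ha => h a (Finset.mem_insert_of_mem ha))

end Good

lemma tv_mem_Aset : (X (Sum.inr ()) : MvPolynomial (V m) k) ∈ Aset k m :=
  Set.mem_union_left _ (Set.mem_union_left _ rfl)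

lemma symm_rename_mem_adjoin (P : MvPolynomial (Fin m) k) (hP : P.IsSymmetric)
    (ι : Fin m → V m)
    (hgen : ∀ i : Fin m, rename ι (esymm (Fin m) k (i + 1)) ∈ Aset k m) :
    rename ι P ∈ Algebra.adjoin k (Aset k m) := by
  obtain ⟨q, hq⟩ := esymmAlgHom_surjective (σ := Fin m) (R := k) (n := m)
    (by simp) ⟨P, hP⟩
  have hPq : P = aeval (fun i : Fin m => esymm (Fin m) k (i + 1)) q := by
    rw [← esymmAlgHom_apply, hq]
  have h1 : rename ι P = aeval (fun i : Fin m => rename ι (esymm (Fin m) k (i + 1))) q := by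
    rw [hPq, comp_aeval_apply]
  rw [h1]
  have h2 : aeval (fun i : Fin m => rename ι (esymm (Fin m) k (i + 1))) q ∈
      Algebra.adjoin k (Set.range fun i : Fin m => rename ι (esymm (Fin m) k (i + 1))) := by
    rw [Algebra.adjoin_range_eq_range_aeval]
    exact ⟨q, rfl⟩
  exact Algebra.adjoin_mono (Set.range_subset_iff.2 hgen) h2

lemma x_esymm_mem (i : Fin m) :
    rename (Sum.inl ∘ Sum.inl : Fin m → V m) (esymm (Fin m) k (i + 1)) ∈ Aset k m := by
  refine Set.mem_union_left _ (Set.mem_union_right _ ⟨i.succ, ?_⟩)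
  simp [Fin.val_succ]

lemma y_esymm_mem (i : Fin m) :
    rename (Sum.inl ∘ Sum.inr : Fin m → V m) (esymm (Fin m) k (i + 1)) ∈ Aset k m := by
  refine Set.mem_union_right _ ⟨i.succ, ?_⟩
  simp [Fin.val_succ]

section WithIdeal

variable {I : Ideal (MvPolynomial (V m) k)}
  (hI : I = Ideal.span (⋃ i : Fin m,
      {X (Sum.inl (Sum.inl i)) * X (Sum.inl (Sum.inr i)) - X (Sum.inr ())}))

include hI

lemma gen_mem (i : Fin m) :
    (X (Sum.inl (Sum.inl i)) * X (Sum.inl (Sum.inr i)) - X (Sum.inr ())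
      : MvPolynomial (V m) k) ∈ I := by
  rw [hI]
  exact Ideal.subset_span (Set.mem_iUnion.2 ⟨i, rfl⟩)

lemma pow_gen_mem (i : Fin m) (n : ℕ) :
    (X (Sum.inl (Sum.inl i)) ^ n * X (Sum.inl (Sum.inr i)) ^ n - X (Sum.inr ()) ^ n
      : MvPolynomial (V m) k) ∈ I := by
  obtain ⟨e, he⟩ := sub_dvd_pow_sub_pow
    (X (Sum.inl (Sum.inl i)) * X (Sum.inl (Sum.inr i)) : MvPolynomial (V m) k)
    (X (Sum.inr ())) n
  rw [← mul_pow, he]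
  exact I.mul_mem_right e (gen_mem hI i)

lemma good_pc (c : ℕ × ℕ) : Good I (∑ i, blk k m c i) := by
  rcases le_total c.2 c.1 with h | h
  · refine ⟨X (Sum.inr ()) ^ c.2 *
      rename (Sum.inl ∘ Sum.inl) (psum (Fin m) k (c.1 - c.2)), ?_, ?_⟩
    · exact mul_mem (pow_mem (Algebra.subset_adjoin tv_mem_Aset) _)
        (symm_rename_mem_adjoin _ (psum_isSymmetric _ _ _) _ x_esymm_mem)
    · have hren : rename (Sum.inl ∘ Sum.inl : Fin m → V m) (psum (Fin m) k (c.1 - c.2))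
          = ∑ i : Fin m, X (Sum.inl (Sum.inl i)) ^ (c.1 - c.2) := by
        rw [psum, map_sum]
        simp
      rw [hren, Finset.mul_sum, ← Finset.sum_sub_distrib]
      refine Ideal.sum_mem I fun i _ => ?_
      have hx : (X (Sum.inl (Sum.inl i)) : MvPolynomial (V m) k) ^ c.1
          = X (Sum.inl (Sum.inl i)) ^ c.2 * X (Sum.inl (Sum.inl i)) ^ (c.1 - c.2) := by
        rw [← pow_add]
        congr 1
        omega
      have key : blk k m c i - X (Sum.inr ()) ^ c.2 * X (Sum.inl (Sum.inl i)) ^ (c.1 - c.2)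
          = (X (Sum.inl (Sum.inl i)) ^ c.2 * X (Sum.inl (Sum.inr i)) ^ c.2
              - X (Sum.inr ()) ^ c.2) * X (Sum.inl (Sum.inl i)) ^ (c.1 - c.2) := by
        simp only [blk]
        rw [hx]
        ring
      rw [key]
      exact I.mul_mem_right _ (pow_gen_mem hI i c.2)
  · refine ⟨X (Sum.inr ()) ^ c.1 *
      rename (Sum.inl ∘ Sum.inr) (psum (Fin m) k (c.2 - c.1)), ?_, ?_⟩
    · exact mul_mem (pow_mem (Algebra.subset_adjoin tv_mem_Aset) _)
        (symm_rename_mem_adjoin _ (psum_isSymmetric _ _ _) _ y_esymm_mem)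
    · have hren : rename (Sum.inl ∘ Sum.inr : Fin m → V m) (psum (Fin m) k (c.2 - c.1))
          = ∑ i : Fin m, X (Sum.inl (Sum.inr i)) ^ (c.2 - c.1) := by
        rw [psum, map_sum]
        simp
      rw [hren, Finset.mul_sum, ← Finset.sum_sub_distrib]
      refine Ideal.sum_mem I fun i _ => ?_
      have hy : (X (Sum.inl (Sum.inr i)) : MvPolynomial (V m) k) ^ c.2
          = X (Sum.inl (Sum.inr i)) ^ c.1 * X (Sum.inl (Sum.inr i)) ^ (c.2 - c.1) := by
        rw [← pow_add]
        congr 1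
        omega
      have key : blk k m c i - X (Sum.inr ()) ^ c.1 * X (Sum.inl (Sum.inr i)) ^ (c.2 - c.1)
          = (X (Sum.inl (Sum.inl i)) ^ c.1 * X (Sum.inl (Sum.inr i)) ^ c.1
              - X (Sum.inr ()) ^ c.1) * X (Sum.inl (Sum.inr i)) ^ (c.2 - c.1) := by
        simp only [blk]
        rw [hy]
        ring
      rw [key]
      exact I.mul_mem_right _ (pow_gen_mem hI i c.1)

lemma good_av [CharZero k] (r : ℕ) :
    ∀ v : Fin m → ℕ × ℕ, (univ.filter fun i => v i ≠ 0).card ≤ r → Good I (Av k m v) := by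
  induction r with
  | zero =>
    intro v h
    have hfe : (univ.filter fun i => v i ≠ 0) = ∅ :=
      Finset.card_eq_zero.1 (Nat.le_zero.1 h)
    have hv : ∀ i, v i = 0 := by
      intro i
      by_contra hne
      have hmem : i ∈ univ.filter fun i => v i ≠ 0 :=
        Finset.mem_filter.2 ⟨Finset.mem_univ _, hne⟩
      rw [hfe] at hmem
      exact absurd hmem (Finset.notMem_empty i)
    have hmon : mon k m v = 1 := Finset.prod_eq_one fun i _ => by
      rw [hv i]; simp [blk]
    have hAv : Av k m v = (Fintype.card (Equiv.Perm (Fin m))) •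
        (1 : MvPolynomial (V m) k) := by
      unfold Av
      rw [hmon]
      simp
    rw [hAv]
    exact good_of_mem (nsmul_mem (one_mem _) _)
  | succ r ih =>
    intro v h
    by_cases hcle : (univ.filter fun i => v i ≠ 0).card ≤ r
    · exact ih v hcle
    have hcard : (univ.filter fun i => v i ≠ 0).card = r + 1 :=
      le_antisymm h (Nat.succ_le_of_lt (not_le.1 hcle))
    obtain ⟨i₀, hi₀⟩ : (univ.filter fun i => v i ≠ 0).Nonempty :=
      Finset.card_pos.1 (by omega)
    have hvi₀ : v i₀ ≠ 0 := (Finset.mem_filter.1 hi₀).2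
    set c := v i₀ with hc0
    set w := Function.update v i₀ 0 with hw
    have hsuppw : (univ.filter fun i => w i ≠ 0)
        = (univ.filter fun i => v i ≠ 0).erase i₀ := by
      ext j
      rcases eq_or_ne j i₀ with rfl | hj
      · simp [hw]
      · simp [hw, Function.update_of_ne hj, hj]
    have hcw : (univ.filter fun i => w i ≠ 0).card = r := by
      rw [hsuppw, Finset.card_erase_of_mem hi₀, hcard]
      omega
    -- terms with w i = 0 all give Av v
    have havi : ∀ i : Fin m, w i = 0 →
        Av k m (Function.update w i (w i + c)) = Av k m v := by
      intro i hwi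
      rw [hwi, zero_add]
      have hupd : Function.update w i c = v ∘ (Equiv.swap i₀ i) := by
        funext j
        rcases eq_or_ne j i with hji | hji
        · rw [hji, Function.update_self]
          simp [Equiv.swap_apply_right, hc0]
        · rw [Function.update_of_ne hji]
          rcases eq_or_ne j i₀ with hji₀ | hji₀
          · have hii₀ : i ≠ i₀ := fun hh => hji (hji₀.trans hh.symm)
            have hvi : v i = 0 := by
              have h' := hwi
              rw [hw, Function.update_of_ne hii₀] at h'
              exact h'
            simp only [Function.comp_apply]
            rw [hji₀, Equiv.swap_apply_left, hvi, hw, Function.update_self]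
          · simp only [Function.comp_apply, Equiv.swap_apply_of_ne_of_ne hji₀ hji]
            rw [hw, Function.update_of_ne hji₀]
      rw [hupd, av_comp]
    -- the key identity, split
    have hid := pc_mul_av (k := k) (m := m) c w
    rw [← Finset.sum_filter_add_sum_filter_not univ (fun i => w i ≠ 0)
      (fun i => Av k m (Function.update w i (w i + c)))] at hid
    have hsecond : (∑ i ∈ univ.filter fun i => ¬ w i ≠ 0,
        Av k m (Function.update w i (w i + c)))
        = (univ.filter fun i => ¬ w i ≠ 0).card • Av k m v := by
      rw [Finset.sum_congr rfl (fun i hi => havi i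
        (not_ne_iff.1 (Finset.mem_filter.1 hi).2)), Finset.sum_const]
    rw [hsecond] at hid
    set N := (univ.filter fun i => ¬ w i ≠ 0).card with hN
    have hNpos : N ≠ 0 := by
      have h1 := Finset.card_filter_add_card_filter_not
        (s := univ) (p := fun i : Fin m => w i ≠ 0)
      have h2 : (univ.filter fun i => v i ≠ 0).card ≤ m := by
        simpa using Finset.card_filter_le univ (fun i : Fin m => v i ≠ 0)
      simp only [Finset.card_univ, Fintype.card_fin] at h1
      omega
    have hNv : (N : k) • Av k m v
        = (∑ i, blk k m c i) * Av k m w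
          - ∑ i ∈ univ.filter fun i => w i ≠ 0,
              Av k m (Function.update w i (w i + c)) := by
      rw [Nat.cast_smul_eq_nsmul, hid]
      ring
    have hAvv : Av k m v = (N : k)⁻¹ •
        ((∑ i, blk k m c i) * Av k m w
          - ∑ i ∈ univ.filter fun i => w i ≠ 0,
              Av k m (Function.update w i (w i + c))) := by
      rw [← hNv, smul_smul, inv_mul_cancel₀ (Nat.cast_ne_zero.2 hNpos), one_smul]
    rw [hAvv]
    refine Good.smul _ (Good.sub (Good.mul (good_pc hI c) (ih w (le_of_eq hcw)))
      (good_sum _ _ fun i hi => ih _ (le_of_eq ?_)))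
    -- support of update w i (w i + c) equals support of w
    have hwi : w i ≠ 0 := (Finset.mem_filter.1 hi).2
    have hsupp : (univ.filter fun j => Function.update w i (w i + c) j ≠ 0)
        = univ.filter fun j => w j ≠ 0 := by
      ext j
      rcases eq_or_ne j i with rfl | hj
      · simp only [Finset.mem_filter, Finset.mem_univ, true_and,
          Function.update_self]
        constructor
        · intro _; exact hwi
        · intro _
          intro hzero
          apply hwi
          have h1 : (w j).1 + c.1 = 0 := by simpa using congrArg Prod.fst hzero
          have h2 : (w j).2 + c.2 = 0 := by simpa using congrArg Prod.snd hzero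
          refine Prod.ext ?_ ?_
          · simp only [Prod.fst_zero]; omega
          · simp only [Prod.snd_zero]; omega
      · simp [Function.update_of_ne hj]
    rw [hsupp, hcw]

lemma good_av_monomial [CharZero k] (d : V m →₀ ℕ) :
    Good I (∑ g : Equiv.Perm (Fin m), ren k m g (monomial d (1 : k))) := by
  set v : Fin m → ℕ × ℕ :=
    fun i => (d (Sum.inl (Sum.inl i)), d (Sum.inl (Sum.inr i))) with hv
  have h1 : mon k m v
      = (∏ i : Fin m, X (Sum.inl (Sum.inl i)) ^ d (Sum.inl (Sum.inl i))) *
        ∏ i : Fin m, X (Sum.inl (Sum.inr i)) ^ d (Sum.inl (Sum.inr i)) := by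
    rw [mon, ← Finset.prod_mul_distrib]
    rfl
  have hmon : (monomial d (1 : k) : MvPolynomial (V m) k)
      = X (Sum.inr ()) ^ d (Sum.inr ()) * mon k m v := by
    calc (monomial d (1 : k) : MvPolynomial (V m) k)
        = ∏ s : V m, X s ^ d s := by
          rw [monomial_eq, C_1, one_mul, Finsupp.prod_fintype _ _ (fun s => pow_zero _)]
      _ = ((∏ i : Fin m, X (Sum.inl (Sum.inl i)) ^ d (Sum.inl (Sum.inl i))) *
            ∏ i : Fin m, X (Sum.inl (Sum.inr i)) ^ d (Sum.inl (Sum.inr i))) *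
            X (Sum.inr ()) ^ d (Sum.inr ()) := by
          rw [Fintype.prod_sum_type, Fintype.prod_sum_type]
          congr 1
          exact Fintype.prod_unique _
      _ = X (Sum.inr ()) ^ d (Sum.inr ()) * mon k m v := by rw [h1]; ring
  have hren : ∀ g : Equiv.Perm (Fin m), ren k m g (monomial d (1 : k)) =
      X (Sum.inr ()) ^ d (Sum.inr ()) * ren k m g (mon k m v) := by
    intro g
    rw [hmon, map_mul, map_pow]
    congr 2
    simp [ren]
  rw [Finset.sum_congr rfl fun g _ => hren g, ← Finset.mul_sum]
  exact Good.mul (good_of_mem (pow_mem (Algebra.subset_adjoin tv_mem_Aset) _))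
    (good_av hI m v ((Finset.card_filter_le _ _).trans (by simp)))

end WithIdeal

end Stmt2

end Stmt2Aux

/-- over a field of characteristic zero, every `Sₘ`-invariant element of
`k[x₁,…,xₘ,y₁,…,yₘ,t]/(xᵢyᵢ − t)` is a polynomial in `t` and the elementary symmetric
functions of the `x`'s and of the `y`'s (stated in the polynomial ring, modulo the ideal). -/
theorem stmt_2 {k : Type*} [Field k] [CharZero k] (m : ℕ)
    (I : Ideal (MvPolynomial ((Fin m ⊕ Fin m) ⊕ Unit) k))
    (hI : I = Ideal.span (⋃ i : Fin m,
      {X (Sum.inl (Sum.inl i)) * X (Sum.inl (Sum.inr i)) - X (Sum.inr ())}))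
    (f : MvPolynomial ((Fin m ⊕ Fin m) ⊕ Unit) k)
    (hf : ∀ g : Equiv.Perm (Fin m),
      rename (Sum.map (Sum.map (⇑g) (⇑g)) id) f - f ∈ I) :
    ∃ p ∈ Algebra.adjoin k
        (({X (Sum.inr ())} : Set (MvPolynomial ((Fin m ⊕ Fin m) ⊕ Unit) k)) ∪
          (Set.range fun j : Fin (m + 1) =>
            rename (Sum.inl ∘ Sum.inl) (esymm (Fin m) k (j : ℕ))) ∪
          (Set.range fun j : Fin (m + 1) =>
            rename (Sum.inl ∘ Sum.inr) (esymm (Fin m) k (j : ℕ)))),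
      f - p ∈ I := by
  classical
  have hM0 : ((Fintype.card (Equiv.Perm (Fin m)) : ℕ) : k) ≠ 0 :=
    Nat.cast_ne_zero.2 Fintype.card_ne_zero
  set F : MvPolynomial (Stmt2.V m) k :=
    ∑ g : Equiv.Perm (Fin m), Stmt2.ren k m g f with hF
  have hgoodF : Stmt2.Good I F := by
    have hdecomp : F = ∑ d ∈ f.support, (coeff d f) •
        ∑ g : Equiv.Perm (Fin m), Stmt2.ren k m g (monomial d (1 : k)) := by
      rw [hF]
      calc ∑ g : Equiv.Perm (Fin m), Stmt2.ren k m g f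
          = ∑ g : Equiv.Perm (Fin m),
              ∑ d ∈ f.support, Stmt2.ren k m g (monomial d (coeff d f)) := by
            refine Finset.sum_congr rfl fun g _ => ?_
            conv_lhs => rw [f.as_sum]
            rw [map_sum]
        _ = ∑ d ∈ f.support,
              ∑ g : Equiv.Perm (Fin m), Stmt2.ren k m g (monomial d (coeff d f)) :=
            Finset.sum_comm
        _ = ∑ d ∈ f.support, (coeff d f) •
              ∑ g : Equiv.Perm (Fin m), Stmt2.ren k m g (monomial d (1 : k)) := by
            refine Finset.sum_congr rfl fun d _ => ?_
            rw [Finset.smul_sum]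
            refine Finset.sum_congr rfl fun g _ => ?_
            rw [← map_smul]
            congr 1
            rw [MvPolynomial.smul_monomial, smul_eq_mul, mul_one]
    rw [hdecomp]
    exact Stmt2.good_sum _ _ fun d _ =>
      Stmt2.Good.smul _ (Stmt2.good_av_monomial hI d)
  obtain ⟨q, hq, hFq⟩ := hgoodF
  refine ⟨((Fintype.card (Equiv.Perm (Fin m)) : k))⁻¹ • q, ?_, ?_⟩
  · exact Subalgebra.smul_mem _ hq _
  · have h1 : F - (Fintype.card (Equiv.Perm (Fin m))) • f ∈ I := by
      have he : F - (Fintype.card (Equiv.Perm (Fin m))) • f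
          = ∑ g : Equiv.Perm (Fin m), (Stmt2.ren k m g f - f) := by
        rw [Finset.sum_sub_distrib, Finset.sum_const, Finset.card_univ, hF]
      rw [he]
      exact Ideal.sum_mem I fun g _ => hf g
    have h2 : f - ((Fintype.card (Equiv.Perm (Fin m)) : k))⁻¹ • q
        = ((Fintype.card (Equiv.Perm (Fin m)) : k))⁻¹ •
          (((Fintype.card (Equiv.Perm (Fin m))) • f - F) + (F - q)) := by
      rw [sub_add_sub_cancel, smul_sub, ← Nat.cast_smul_eq_nsmul k, smul_smul,
        inv_mul_cancel₀ hM0, one_smul]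
    rw [h2, MvPolynomial.smul_eq_C_mul]
    refine I.mul_mem_left _ (add_mem ?_ hFq)
    rw [← neg_sub]
    exact neg_mem h1
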